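/- Let A₁ = ℚ[x, y, z], A₂ = ℚ[a, b, c, d], B = ℚ[x, y], π₁ : A₁ → B the ℚ-algebra homomorphism with x ↦ x, y ↦ y, z ↦ 0, and π₂ : A₂ → B the ℚ-algebra homomorphism with a ↦ x, b ↦ 2y − x², c ↦ y, d ↦ −y(x² − 4y). Let Φ : ℚ[K₁, K₂, G₂, G₃, Q] → A₁ ×_B A₂ be the ℚ-algebra homomorphism determined by K₁ ↦ (x, a), K₂ ↦ (2y − x², b), G₂ ↦ (y, c), G₃ ↦ (z, 0), Q ↦ (−y(x² − 4y), d). Then Φ is surjective and its kernel is the ideal generated by the two polynomials G₃·(−K₂ + 2G₂ − K₁²) and G₃·(Q + G₂(K₁² − 4G₂)). -/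

import Mathlib

open MvPolynomial

namespace Stmt10

/-- `A₁ = ℚ[x, y, z]` with `x = X 0`, `y = X 1`, `z = X 2`. -/
abbrev A1 : Type := MvPolynomial (Fin 3) ℚ

/-- `A₂ = ℚ[a, b, c, d]` with `a = X 0`, `b = X 1`, `c = X 2`, `d = X 3`. -/
abbrev A2 : Type := MvPolynomial (Fin 4) ℚ

/-- `B = ℚ[x, y]` with `x = X 0`, `y = X 1`. -/
abbrev B : Type := MvPolynomial (Fin 2) ℚ

/-- `π₁ : A₁ → B`, `x ↦ x`, `y ↦ y`, `z ↦ 0`. -/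
noncomputable def π₁ : A1 →ₐ[ℚ] B := aeval ![X 0, X 1, 0]

/-- `π₂ : A₂ → B`, `a ↦ x`, `b ↦ 2y − x²`, `c ↦ y`, `d ↦ −y(x² − 4y)`. -/
noncomputable def π₂ : A2 →ₐ[ℚ] B :=
  aeval ![X 0, 2 * X 1 - X 0 ^ 2, X 1, -X 1 * (X 0 ^ 2 - 4 * X 1)]

/-- The fiber product `A₁ ×_B A₂` along `π₁` and `π₂`, as a subring of `A₁ × A₂`. -/
noncomputable def F : Subring (A1 × A2) :=
  (π₁.toRingHom.comp (RingHom.fst A1 A2)).eqLocus (π₂.toRingHom.comp (RingHom.snd A1 A2))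

/-- `Φ : ℚ[K₁, K₂, G₂, G₃, Q] → A₁ ×_B A₂` determined by `K₁ ↦ (x, a)`,
`K₂ ↦ (2y − x², b)`, `G₂ ↦ (y, c)`, `G₃ ↦ (z, 0)`, `Q ↦ (−y(x² − 4y), d)`
(with `K₁ = X 0`, `K₂ = X 1`, `G₂ = X 2`, `G₃ = X 3`, `Q = X 4`). -/
noncomputable def Φ : MvPolynomial (Fin 5) ℚ →ₐ[ℚ] A1 × A2 :=
  aeval ![(X 0, X 0), (2 * X 1 - X 0 ^ 2, X 1), (X 1, X 2), (X 2, 0),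
    (-X 1 * (X 0 ^ 2 - 4 * X 1), X 3)]

/-! Auxiliary homomorphisms. -/

noncomputable def Φ1 : MvPolynomial (Fin 5) ℚ →ₐ[ℚ] A1 :=
  aeval ![X 0, 2 * X 1 - X 0 ^ 2, X 1, X 2, -X 1 * (X 0 ^ 2 - 4 * X 1)]
noncomputable def Φ2 : MvPolynomial (Fin 5) ℚ →ₐ[ℚ] A2 :=
  aeval ![X 0, X 1, X 2, 0, X 3]
noncomputable def ι1 : A1 →ₐ[ℚ] MvPolynomial (Fin 5) ℚ := aeval ![X 0, X 2, X 3]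
noncomputable def ι2 : A2 →ₐ[ℚ] MvPolynomial (Fin 5) ℚ := aeval ![X 0, X 1, X 2, X 4]
noncomputable def ιB : B →ₐ[ℚ] A1 := aeval ![X 0, X 1]

lemma e6 : (AlgHom.fst ℚ A1 A2).comp Φ = Φ1 := by
  apply MvPolynomial.algHom_ext; intro i; fin_cases i <;> simp [Φ, Φ1, AlgHom.fst_apply]

lemma e7 : (AlgHom.snd ℚ A1 A2).comp Φ = Φ2 := by
  apply MvPolynomial.algHom_ext; intro i; fin_cases i <;> simp [Φ, Φ2, AlgHom.snd_apply]

lemma comp1 (p : MvPolynomial (Fin 5) ℚ) : (Φ p).1 = Φ1 p := by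
  simpa [AlgHom.fst_apply] using DFunLike.congr_fun e6 p

lemma comp2 (p : MvPolynomial (Fin 5) ℚ) : (Φ p).2 = Φ2 p := by
  simpa [AlgHom.snd_apply] using DFunLike.congr_fun e7 p

lemma e1 : Φ1.comp ι1 = AlgHom.id ℚ A1 := by
  apply MvPolynomial.algHom_ext; intro i; fin_cases i <;> simp [Φ1, ι1]

lemma e2 : Φ2.comp ι2 = AlgHom.id ℚ A2 := by
  apply MvPolynomial.algHom_ext; intro i; fin_cases i <;> simp [Φ2, ι2]

lemma e3 : Φ1.comp ι2 = ιB.comp π₂ := by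
  apply MvPolynomial.algHom_ext; intro i; fin_cases i <;>
    simp [Φ1, ι2, ιB, π₂, map_ofNat]

lemma e5 : π₁.comp Φ1 = π₂.comp Φ2 := by
  apply MvPolynomial.algHom_ext; intro i; fin_cases i <;>
    simp [π₁, π₂, Φ1, Φ2, map_ofNat]

lemma subst_mem {n : ℕ} (ρ : MvPolynomial (Fin n) ℚ →ₐ[ℚ] MvPolynomial (Fin n) ℚ)
    (I : Ideal (MvPolynomial (Fin n) ℚ)) (h : ∀ i, X i - ρ (X i) ∈ I)
    (p : MvPolynomial (Fin n) ℚ) : p - ρ p ∈ I := by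
  induction p using MvPolynomial.induction_on with
  | C a => simp
  | add p q hp hq => simpa [map_add, sub_add_sub_comm] using I.add_mem hp hq
  | mul_X p i hp =>
      have e : p * X i - ρ (p * X i) = (p - ρ p) * X i + ρ p * (X i - ρ (X i)) := by
        rw [map_mul]; ring
      rw [e]
      exact I.add_mem (I.mul_mem_right _ hp) (I.mul_mem_left _ (h i))

/-- `Φ` is surjective onto the fiber product `A₁ ×_B A₂` and its kernel is the ideal
generated by `G₃(−K₂ + 2G₂ − K₁²)` and `G₃(Q + G₂(K₁² − 4G₂))`. -/
theorem stmt10 :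
    Φ.toRingHom.range = F ∧
    RingHom.ker Φ =
      Ideal.span
        ({X 3 * (-X 1 + 2 * X 2 - X 0 ^ 2),
          X 3 * (X 4 + X 2 * (X 0 ^ 2 - 4 * X 2))} :
          Set (MvPolynomial (Fin 5) ℚ)) := by
  have memF : ∀ x : A1 × A2, x ∈ F ↔ π₁ x.1 = π₂ x.2 := fun x => Iff.rfl
  constructor
  · apply le_antisymm
    · rintro x ⟨p, rfl⟩
      rw [memF]
      show π₁ ((Φ p).1) = π₂ ((Φ p).2)
      rw [comp1, comp2]
      simpa using DFunLike.congr_fun e5 p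
    · intro x hx
      have hx' : π₁ x.1 = π₂ x.2 := (memF x).mp hx
      obtain ⟨h, hh⟩ : ∃ h, h * X 2 = x.1 - ιB (π₁ x.1) := by
        refine Ideal.mem_span_singleton'.mp ?_
        refine subst_mem (ιB.comp π₁) _ ?_ x.1
        intro i; fin_cases i <;> simp [ιB, π₁, Ideal.mem_span_singleton]
      refine ⟨ι2 x.2 + X 3 * ι1 h, ?_⟩
      have hc1 : (Φ (ι2 x.2 + X 3 * ι1 h)).1 = x.1 := by
        rw [comp1, map_add, map_mul]
        have a1 : Φ1 (ι1 h) = h := DFunLike.congr_fun e1 h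
        have a2 : Φ1 (ι2 x.2) = ιB (π₂ x.2) := DFunLike.congr_fun e3 x.2
        have a3 : Φ1 (X 3) = X 2 := by simp [Φ1]
        rw [a1, a2, a3, ← hx']
        linear_combination hh
      have hc2 : (Φ (ι2 x.2 + X 3 * ι1 h)).2 = x.2 := by
        rw [comp2, map_add, map_mul]
        have a1 : Φ2 (ι2 x.2) = x.2 := DFunLike.congr_fun e2 x.2
        have a3 : Φ2 (X 3) = 0 := by simp [Φ2]
        rw [a1, a3]; ring
      exact Prod.ext hc1 hc2
  · apply le_antisymm
    · intro r hr
      rw [RingHom.mem_ker] at hr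
      have hr' : Φ r = 0 := hr
      have hr1 : Φ1 r = 0 := by rw [← comp1, hr']; rfl
      have hr2 : Φ2 r = 0 := by rw [← comp2, hr']; rfl
      have hrX3 : r ∈ Ideal.span {(X 3 : MvPolynomial (Fin 5) ℚ)} := by
        have := subst_mem (ι2.comp Φ2) (Ideal.span {X 3})
          (by intro i; fin_cases i <;> simp [ι2, Φ2, Ideal.mem_span_singleton]) r
        simpa [AlgHom.comp_apply, hr2] using this
      obtain ⟨s, hs⟩ := Ideal.mem_span_singleton'.mp hrX3
      have hs1 : Φ1 s = 0 := by
        have hX : Φ1 (X 3) = X 2 := by simp [Φ1]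
        have hz : Φ1 s * X 2 = 0 := by
          rw [← hX, ← map_mul, hs, hr1]
        rcases mul_eq_zero.mp hz with h' | h'
        · exact h'
        · exact absurd h' (MvPolynomial.X_ne_zero _)
      have hsJ : s ∈ Ideal.span
          ({-X 1 + 2 * X 2 - X 0 ^ 2, X 4 + X 2 * (X 0 ^ 2 - 4 * X 2)} :
            Set (MvPolynomial (Fin 5) ℚ)) := by
        have hgen : ∀ i, X i - (ι1.comp Φ1) (X i) ∈ Ideal.span
            ({-X 1 + 2 * X 2 - X 0 ^ 2, X 4 + X 2 * (X 0 ^ 2 - 4 * X 2)} :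
              Set (MvPolynomial (Fin 5) ℚ)) := by
          intro i; fin_cases i
          · simp [ι1, Φ1]
          · refine Ideal.mem_span_pair.mpr ⟨-1, 0, ?_⟩
            simp [ι1, Φ1, map_ofNat]; try ring
          · simp [ι1, Φ1]
          · simp [ι1, Φ1]
          · refine Ideal.mem_span_pair.mpr ⟨0, 1, ?_⟩
            simp [ι1, Φ1, map_ofNat]; try ring
        have := subst_mem (ι1.comp Φ1) _ hgen s
        simpa [AlgHom.comp_apply, hs1] using this
      obtain ⟨a, b, hab⟩ := Ideal.mem_span_pair.mp hsJ
      refine Ideal.mem_span_pair.mpr ⟨a, b, ?_⟩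
      rw [← hs, ← hab]; ring
    · rw [Ideal.span_le]
      rintro g hg
      simp only [Set.mem_insert_iff, Set.mem_singleton_iff] at hg
      have key : ∀ g : MvPolynomial (Fin 5) ℚ, Φ1 g = 0 → Φ2 g = 0 →
          g ∈ (RingHom.ker Φ.toRingHom : Set (MvPolynomial (Fin 5) ℚ)) := by
        intro g h1 h2
        simp only [SetLike.mem_coe, RingHom.mem_ker]
        show Φ g = 0
        exact Prod.ext (by rw [comp1]; simpa using h1) (by rw [comp2]; simpa using h2)
      rcases hg with rfl | rfl
      · refine key _ ?_ ?_ <;> · simp [Φ1, Φ2, map_ofNat]; try ring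
      · refine key _ ?_ ?_ <;> · simp [Φ1, Φ2, map_ofNat]; try ring


end Stmt10
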